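/- arXiv:1811.05160 — 2 statements merged into one kernel-verified Lean document; each statement's English description precedes it below -/
import Mathlib

section
/- Let * be any of the six measures B, BA, TA, C, BC, L, and let 𝓑 ⊆ 2^V \ {V} be a family of nonempty sets with 𝓑^⊥ its family of inclusion-minimal members. Then there exists a pure Horn CNF Φ representing the key Horn function h_𝓑 with |Φ|_* = OPT_*(𝓑) whose set of bodies is exactly 𝓑^⊥. -/
open Finset

variable {V : Type*} [Fintype V] [DecidableEq V]

/-- A pure Horn CNF is a finite set of clauses `(B, v)`: body `B`, head `v`,
with `B` nonempty and `v ∉ B`. -/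
def PureHorn (Φ : Finset (Finset V × V)) : Prop :=
  ∀ c ∈ Φ, c.1.Nonempty ∧ c.2 ∉ c.1

/-- A set `W` is closed under the clauses of `Φ`. -/
def HornClosed (Φ : Finset (Finset V × V)) (W : Set V) : Prop :=
  ∀ c ∈ Φ, ↑c.1 ⊆ W → c.2 ∈ W

/-- Forward-chaining closure `F_Φ(Z)`: the smallest set containing `Z`
that is closed under the clauses of `Φ`. -/
def hornClosure (Φ : Finset (Finset V × V)) (Z : Set V) : Set V :=
  ⋂₀ {W : Set V | Z ⊆ W ∧ HornClosed Φ W}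

/-- `Ψ_𝓑 = ⋀_{B ∈ 𝓑} B → (V \ B)`. -/
def keyCNF (𝓑 : Finset (Finset V)) : Finset (Finset V × V) :=
  𝓑.biUnion fun B => (Finset.univ \ B).image fun v => (B, v)

/-- `Φ` represents the key Horn function `h_𝓑`, i.e. `Φ` is a pure Horn CNF
equivalent to `Ψ_𝓑`. -/
def Represents (𝓑 : Finset (Finset V)) (Φ : Finset (Finset V × V)) : Prop :=
  PureHorn Φ ∧ ∀ Z : Finset V, hornClosure Φ ↑Z = hornClosure (keyCNF 𝓑) ↑Z

/-- (B) number of (distinct) bodies. -/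
def sizeB (Φ : Finset (Finset V × V)) : ℕ := (Φ.image Prod.fst).card
/-- (BA) body area `Σ_i |B_i|` over the distinct bodies. -/
def sizeBA (Φ : Finset (Finset V × V)) : ℕ := ∑ B ∈ Φ.image Prod.fst, B.card
/-- (C) number of clauses `Σ_i |H_i|`. -/
def sizeC (Φ : Finset (Finset V × V)) : ℕ := Φ.card
/-- (TA) total area `Σ_i (|B_i| + |H_i|)`. -/
def sizeTA (Φ : Finset (Finset V × V)) : ℕ := sizeBA Φ + sizeC Φ
/-- (BC) bodies plus clauses `Σ_i (|H_i| + 1)`. -/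
def sizeBC (Φ : Finset (Finset V × V)) : ℕ := sizeB Φ + sizeC Φ
/-- (L) number of literals `Σ_i (|B_i| + 1)·|H_i|`. -/
def sizeL (Φ : Finset (Finset V × V)) : ℕ := ∑ c ∈ Φ, (c.1.card + 1)

/-- `μ` is one of the six size measures. -/
def IsMeasure (μ : Finset (Finset V × V) → ℕ) : Prop :=
  μ = sizeB ∨ μ = sizeBA ∨ μ = sizeTA ∨ μ = sizeC ∨ μ = sizeBC ∨ μ = sizeL

/-- `OPT_μ(𝓑)`: minimum `μ`-size of a CNF representing `h_𝓑`. -/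
noncomputable def OPT (μ : Finset (Finset V × V) → ℕ) (𝓑 : Finset (Finset V)) : ℕ :=
  sInf {s : ℕ | ∃ Φ : Finset (Finset V × V), Represents 𝓑 Φ ∧ μ Φ = s}

/-- `price_μ(S,T)`: minimum `μ`-size of a pure Horn CNF with bodies in `𝓑`
whose forward chaining from `S` reaches all of `T`. -/
noncomputable def price (μ : Finset (Finset V × V) → ℕ) (𝓑 : Finset (Finset V))
    (S T : Finset V) : ℕ :=
  sInf {s : ℕ | ∃ Φ : Finset (Finset V × V),
    PureHorn Φ ∧ (∀ c ∈ Φ, c.1 ∈ 𝓑) ∧ ↑T ⊆ hornClosure Φ ↑S ∧ μ Φ = s}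

section AuxLemmas

variable {V : Type*} [Fintype V] [DecidableEq V]

lemma subset_hornClosure (Φ : Finset (Finset V × V)) (Z : Set V) :
    Z ⊆ hornClosure Φ Z := by
  intro v hv
  intro W hW
  exact hW.1 hv

lemma hornClosure_subset {Φ : Finset (Finset V × V)} {Z W : Set V}
    (h1 : Z ⊆ W) (h2 : HornClosed Φ W) : hornClosure Φ Z ⊆ W :=
  Set.sInter_subset_of_mem ⟨h1, h2⟩

lemma hornClosed_hornClosure (Φ : Finset (Finset V × V)) (Z : Set V) :
    HornClosed Φ (hornClosure Φ Z) := by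
  intro c hc hsub
  intro W hW
  exact hW.2 c hc fun x hx => hsub hx W hW

lemma mem_keyCNF {𝓑 : Finset (Finset V)} {c : Finset V × V} :
    c ∈ keyCNF 𝓑 ↔ c.1 ∈ 𝓑 ∧ c.2 ∉ c.1 := by
  obtain ⟨B, v⟩ := c
  simp only [keyCNF, Finset.mem_biUnion, Finset.mem_image, Finset.mem_sdiff,
    Finset.mem_univ, true_and, Prod.mk.injEq]
  constructor
  · rintro ⟨B', hB', v', hv', rfl, rfl⟩
    exact ⟨hB', hv'⟩
  · rintro ⟨hB, hv⟩
    exact ⟨B, hB, v, hv, rfl, rfl⟩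

lemma keyClosed_univ {𝓑 : Finset (Finset V)} {W : Set V}
    (hW : HornClosed (keyCNF 𝓑) W) {B : Finset V} (hB : B ∈ 𝓑) (hBW : ↑B ⊆ W) :
    ∀ v : V, v ∈ W := by
  intro v
  by_cases hv : v ∈ B
  · exact hBW hv
  · exact hW (B, v) (mem_keyCNF.mpr ⟨hB, hv⟩) hBW

lemma sum_image_le_nat {α β : Type*} [DecidableEq α] [DecidableEq β]
    (s : Finset α) (f : α → β) (g : β → ℕ) :
    ∑ b ∈ s.image f, g b ≤ ∑ a ∈ s, g (f a) := by
  induction s using Finset.induction_on with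
  | empty => simp
  | @insert a s h ih =>
    rw [Finset.image_insert, Finset.sum_insert h]
    by_cases hfa : f a ∈ s.image f
    · rw [Finset.insert_eq_self.mpr hfa]
      exact le_trans ih (Nat.le_add_left _ _)
    · rw [Finset.sum_insert hfa]
      exact Nat.add_le_add_left ih _

lemma measure_image_le (Φ : Finset (Finset V × V)) (r : Finset V → Finset V)
    (hsub : ∀ c ∈ Φ, r c.1 ⊆ c.1) (μ : Finset (Finset V × V) → ℕ)
    (hμ : IsMeasure μ) :
    μ (Φ.image fun c => (r c.1, c.2)) ≤ μ Φ := by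
  classical
  set m : Finset V × V → Finset V × V := fun c => (r c.1, c.2) with hm
  have himg : (Φ.image m).image Prod.fst = (Φ.image Prod.fst).image r := by
    rw [Finset.image_image, Finset.image_image]
    rfl
  have hB : sizeB (Φ.image m) ≤ sizeB Φ := by
    unfold sizeB
    rw [himg]
    exact Finset.card_image_le
  have hC : sizeC (Φ.image m) ≤ sizeC Φ := Finset.card_image_le
  have hBA : sizeBA (Φ.image m) ≤ sizeBA Φ := by
    unfold sizeBA
    rw [himg]
    refine le_trans (sum_image_le_nat _ _ _) ?_
    refine Finset.sum_le_sum ?_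
    intro B hB'
    obtain ⟨c, hc, rfl⟩ := Finset.mem_image.mp hB'
    exact Finset.card_le_card (hsub c hc)
  have hL : sizeL (Φ.image m) ≤ sizeL Φ := by
    unfold sizeL
    refine le_trans (sum_image_le_nat _ _ _) ?_
    refine Finset.sum_le_sum ?_
    intro c hc
    exact Nat.add_le_add_right (Finset.card_le_card (hsub c hc)) 1
  rcases hμ with h | h | h | h | h | h <;> subst h
  · exact hB
  · exact hBA
  · exact Nat.add_le_add hBA hC
  · exact hC
  · exact Nat.add_le_add hB hC
  · exact hL

end AuxLemmas

/-- For any of the six measures and any family `𝓑 ⊆ 2^V \ {V}` of nonempty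
sets, some `μ`-minimum representation of `h_𝓑` has body set exactly `𝓑^⊥`,
the family of inclusion-minimal members of `𝓑`. -/
theorem stmt0 {V : Type*} [Fintype V] [DecidableEq V]
    (𝓑 : Finset (Finset V))
    (hne : ∀ B ∈ 𝓑, B.Nonempty) (hproper : ∀ B ∈ 𝓑, B ≠ Finset.univ)
    (μ : Finset (Finset V × V) → ℕ) (hμ : IsMeasure μ) :
    ∃ Φ : Finset (Finset V × V), Represents 𝓑 Φ ∧ μ Φ = OPT μ 𝓑 ∧
      Φ.image Prod.fst = 𝓑.filter fun B => ∀ B' ∈ 𝓑, B' ⊆ B → B' = B := by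
  classical
  -- choice function r : picks a minimal member of 𝓑 inside B, when one exists
  have hrex : ∀ B : Finset V, ∃ D : Finset V,
      (∃ C ∈ 𝓑, C ⊆ B) → D ∈ 𝓑 ∧ D ⊆ B ∧ ∀ C ∈ 𝓑, C ⊆ D → C = D := by
    intro B
    by_cases h : (𝓑.filter (· ⊆ B)).Nonempty
    · obtain ⟨D, hD, hmin⟩ := Finset.exists_min_image _ Finset.card h
      rw [Finset.mem_filter] at hD
      refine ⟨D, fun _ => ⟨hD.1, hD.2, ?_⟩⟩
      intro C hC hCD
      exact Finset.eq_of_subset_of_card_le hCD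
        (hmin C (Finset.mem_filter.mpr ⟨hC, hCD.trans hD.2⟩))
    · refine ⟨B, fun hex => absurd ?_ h⟩
      obtain ⟨C, hC1, hC2⟩ := hex
      exact ⟨C, Finset.mem_filter.mpr ⟨hC1, hC2⟩⟩
  choose r hr using hrex
  -- keyCNF represents, so OPT is attained
  have hkeypure : PureHorn (keyCNF 𝓑) := by
    intro c hc
    rw [mem_keyCNF] at hc
    exact ⟨hne _ hc.1, hc.2⟩
  have hkeyrep : Represents 𝓑 (keyCNF 𝓑) := ⟨hkeypure, fun _ => rfl⟩
  have hOPTmem : OPT μ 𝓑 ∈ {s : ℕ | ∃ Φ : Finset (Finset V × V),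
      Represents 𝓑 Φ ∧ μ Φ = s} :=
    Nat.sInf_mem ⟨μ (keyCNF 𝓑), keyCNF 𝓑, hkeyrep, rfl⟩
  obtain ⟨Φ₀, hrep₀, hμ₀⟩ := hOPTmem
  -- every body of Φ₀ contains a member of 𝓑
  have hbody : ∀ c ∈ Φ₀, ∃ C ∈ 𝓑, C ⊆ c.1 := by
    intro c hc
    by_contra hcon
    push_neg at hcon
    have hclosed : HornClosed (keyCNF 𝓑) ↑c.1 := by
      intro d hd hdsub
      rw [mem_keyCNF] at hd
      exact absurd (Finset.coe_subset.mp hdsub) (hcon d.1 hd.1)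
    have h1 : hornClosure (keyCNF 𝓑) ↑c.1 ⊆ ↑c.1 :=
      hornClosure_subset subset_rfl hclosed
    have h2 : c.2 ∈ hornClosure Φ₀ ↑c.1 :=
      hornClosed_hornClosure Φ₀ ↑c.1 c hc (subset_hornClosure _ _)
    rw [hrep₀.2 c.1] at h2
    exact (hrep₀.1 c hc).2 (h1 h2)
  -- the transformed CNF
  set Φ₁ : Finset (Finset V × V) := Φ₀.image fun c => (r c.1, c.2) with hΦ₁
  have hrmem : ∀ c ∈ Φ₀, r c.1 ∈ 𝓑 ∧ r c.1 ⊆ c.1 ∧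
      ∀ C ∈ 𝓑, C ⊆ r c.1 → C = r c.1 := fun c hc => hr c.1 (hbody c hc)
  have hpure₁ : PureHorn Φ₁ := by
    intro d hd
    obtain ⟨c, hc, rfl⟩ := Finset.mem_image.mp hd
    obtain ⟨h1, h2, _⟩ := hrmem c hc
    exact ⟨hne _ h1, fun hmem => (hrep₀.1 c hc).2 (h2 hmem)⟩
  -- closedness transfers
  have hkc : ∀ W : Set V, HornClosed (keyCNF 𝓑) W → HornClosed Φ₁ W := by
    intro W hW d hd hdsub
    obtain ⟨c, hc, rfl⟩ := Finset.mem_image.mp hd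
    exact keyClosed_univ hW (hrmem c hc).1 hdsub c.2
  have h1c : ∀ W : Set V, HornClosed Φ₁ W → HornClosed Φ₀ W := by
    intro W hW c hc hcsub
    exact hW (r c.1, c.2) (Finset.mem_image_of_mem _ hc)
      fun x hx => hcsub ((hrmem c hc).2.1 hx)
  have hcloseq : ∀ Z : Finset V, hornClosure Φ₁ ↑Z = hornClosure (keyCNF 𝓑) ↑Z := by
    intro Z
    refine subset_antisymm ?_ ?_
    · exact hornClosure_subset (subset_hornClosure _ _)
        (hkc _ (hornClosed_hornClosure _ _))
    · rw [← hrep₀.2 Z]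
      exact hornClosure_subset (subset_hornClosure _ _)
        (h1c _ (hornClosed_hornClosure _ _))
  have hrep₁ : Represents 𝓑 Φ₁ := ⟨hpure₁, hcloseq⟩
  have hle : μ Φ₁ ≤ μ Φ₀ := measure_image_le Φ₀ r (fun c hc => (hrmem c hc).2.1) μ hμ
  have hopt₁ : μ Φ₁ = OPT μ 𝓑 :=
    le_antisymm (hμ₀ ▸ hle) (Nat.sInf_le ⟨Φ₁, hrep₁, rfl⟩)
  refine ⟨Φ₁, hrep₁, hopt₁, ?_⟩
  apply Finset.Subset.antisymm
  · intro B hB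
    obtain ⟨d, hd, rfl⟩ := Finset.mem_image.mp hB
    obtain ⟨c, hc, rfl⟩ := Finset.mem_image.mp hd
    obtain ⟨h1, _, h3⟩ := hrmem c hc
    exact Finset.mem_filter.mpr ⟨h1, h3⟩
  · intro B hB
    rw [Finset.mem_filter] at hB
    obtain ⟨hB𝓑, hBmin⟩ := hB
    by_cases hcl : ∃ d ∈ Φ₁, d.1 ⊆ B
    · obtain ⟨d, hd, hdB⟩ := hcl
      obtain ⟨c, hc, rfl⟩ := Finset.mem_image.mp hd
      have heq : r c.1 = B := hBmin _ (hrmem c hc).1 hdB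
      rw [Finset.mem_image]
      exact ⟨(r c.1, c.2), hd, heq⟩
    · exfalso
      push_neg at hcl
      have hclosed : HornClosed Φ₁ ↑B := by
        intro d hd hdsub
        exact absurd (Finset.coe_subset.mp hdsub) (hcl d hd)
      have hsub : hornClosure Φ₁ ↑B ⊆ ↑B := hornClosure_subset subset_rfl hclosed
      obtain ⟨v, hv⟩ : ∃ v, v ∉ B := by
        by_contra hcon
        push_neg at hcon
        exact hproper B hB𝓑 (Finset.eq_univ_iff_forall.mpr hcon)
      have hvmem : v ∈ hornClosure (keyCNF 𝓑) ↑B :=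
        hornClosed_hornClosure (keyCNF 𝓑) ↑B (B, v) (mem_keyCNF.mpr ⟨hB𝓑, hv⟩)
          (subset_hornClosure _ _)
      rw [← hcloseq B] at hvmem
      exact hv (hsub hvmem)
end

section
/- For all B, B' ∈ 𝓑, price_C(B, B') = |B' \ B|. -/
open Finset

variable {V : Type*} [Fintype V] [DecidableEq V]

/-- `price_C(B, B') = |B' \ B|` for all bodies `B, B' ∈ 𝓑`. -/
theorem stmt6 {V : Type*} [Fintype V] [DecidableEq V]
    (𝓑 : Finset (Finset V))
    (hne : ∀ B ∈ 𝓑, B.Nonempty) (hproper : ∀ B ∈ 𝓑, B ≠ Finset.univ)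
    (hsperner : ∀ B ∈ 𝓑, ∀ B' ∈ 𝓑, B ⊆ B' → B = B')
    (hcover : ∀ v : V, ∃ B ∈ 𝓑, v ∈ B)
    (hinter : ∀ v : V, ∃ B ∈ 𝓑, v ∉ B)
    (B B' : Finset V) (hB : B ∈ 𝓑) (hB' : B' ∈ 𝓑) :
    price sizeC 𝓑 B B' = (B' \ B).card := by
  apply le_antisymm
  · -- upper bound: take Φ = {(B, v) : v ∈ B' \ B}
    apply Nat.sInf_le
    refine ⟨(B' \ B).image fun v => (B, v), ?_, ?_, ?_, ?_⟩
    · intro c hc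
      simp only [Finset.mem_image, Finset.mem_sdiff] at hc
      obtain ⟨v, ⟨_, hv⟩, rfl⟩ := hc
      exact ⟨hne B hB, hv⟩
    · intro c hc
      simp only [Finset.mem_image] at hc
      obtain ⟨v, _, rfl⟩ := hc
      exact hB
    · intro x hx
      intro W hW
      obtain ⟨hZW, hclosed⟩ := hW
      by_cases hxB : x ∈ B
      · exact hZW hxB
      · refine hclosed (B, x) ?_ hZW
        simp only [Finset.mem_image, Finset.mem_sdiff]
        exact ⟨x, ⟨hx, hxB⟩, rfl⟩
    · unfold sizeC
      rw [Finset.card_image_of_injective]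
      intro a b hab
      exact (Prod.mk.injEq _ _ _ _).mp hab |>.2
  · -- lower bound
    apply le_csInf
    · refine ⟨(B' \ B).card, (B' \ B).image fun v => (B, v), ?_, ?_, ?_, ?_⟩
      · intro c hc
        simp only [Finset.mem_image, Finset.mem_sdiff] at hc
        obtain ⟨v, ⟨_, hv⟩, rfl⟩ := hc
        exact ⟨hne B hB, hv⟩
      · intro c hc
        simp only [Finset.mem_image] at hc
        obtain ⟨v, _, rfl⟩ := hc
        exact hB
      · intro x hx W hW
        obtain ⟨hZW, hclosed⟩ := hW
        by_cases hxB : x ∈ B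
        · exact hZW hxB
        · refine hclosed (B, x) ?_ hZW
          simp only [Finset.mem_image, Finset.mem_sdiff]
          exact ⟨x, ⟨hx, hxB⟩, rfl⟩
      · unfold sizeC
        rw [Finset.card_image_of_injective]
        intro a b hab
        exact (Prod.mk.injEq _ _ _ _).mp hab |>.2
    · rintro s ⟨Φ, hpure, hbody, hT, rfl⟩
      have key : B' \ B ⊆ Φ.image Prod.snd := by
        intro v hv
        rw [Finset.mem_sdiff] at hv
        have hcl : v ∈ hornClosure Φ ↑B := hT hv.1
        have : v ∈ (↑(B ∪ Φ.image Prod.snd) : Set V) := by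
          apply hcl
          constructor
          · intro x hx
            simp only [Finset.coe_union, Set.mem_union]
            exact Or.inl hx
          · intro c hc _
            simp only [Finset.coe_union, Set.mem_union, Finset.mem_coe,
              Finset.mem_image]
            exact Or.inr ⟨c, hc, rfl⟩
        simp only [Finset.coe_union, Set.mem_union, Finset.mem_coe,
          Finset.mem_image] at this
        rcases this with h | h
        · exact absurd h hv.2
        · simpa [Finset.mem_image] using h
      calc (B' \ B).card ≤ (Φ.image Prod.snd).card := Finset.card_le_card key
        _ ≤ Φ.card := Finset.card_image_le
end
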